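/- Suppose D is a tournament obtained from Pal_7 by replacing each vertex 1,...,6 with a directed triangle (keeping vertex 0 as a single vertex), and suppose D admits a partition of its 19 vertices into 4 transitive sets. Then some color class, viewed as a multiset of Pal_7 vertices, meets at least 4 distinct vertices of Pal_7, contradicting that Pal_7 is TT_4-free; hence no such partition exists. -/
import Mathlib


def IsTournament {V : Type*} (r : V → V → Prop) : Prop :=
  (∀ v, ¬ r v v) ∧ ∀ u v : V, u ≠ v → (r u v ↔ ¬ r v u)

def TransOn {V : Type*} (r : V → V → Prop) (S : Set V) : Prop :=
  ∀ a ∈ S, ∀ b ∈ S, ∀ c ∈ S, r a b → r b c → r a c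

def Colorable {V : Type*} (r : V → V → Prop) (k : ℕ) : Prop :=
  ∃ f : V → Fin k, ∀ c : Fin k, TransOn r {v | f v = c}

def pal7 (i j : ZMod 7) : Prop := i - j = 1 ∨ i - j = 2 ∨ i - j = 4

/-- Vertices of the blow-up: `none` is vertex 0 of `Pal₇`, and `some (i, m)`
is the `m`-th copy of vertex `i + 1` of `Pal₇`. -/
def DV : Type := Option (Fin 6 × ZMod 3)

instance : Fintype DV := instFintypeOption

/-- The vertex of `Pal₇` that a vertex of the blow-up comes from. -/
def proj : DV → ZMod 7
  | none => 0
  | some (i, _) => (i : ℕ) + 1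

/-- Arcs of the blow-up: between copies of distinct `Pal₇`-vertices follow `Pal₇`,
and each triple of copies of one vertex forms a directed triangle. -/
def Darc (u v : DV) : Prop :=
  match u, v with
  | none, none => False
  | none, some (k, _) => pal7 0 ((k : ℕ) + 1)
  | some (i, _), none => pal7 ((i : ℕ) + 1) 0
  | some (i, m), some (k, l) =>
      if i = k then l = m + 1 else pal7 ((i : ℕ) + 1) ((k : ℕ) + 1)

instance (x y : ZMod 7) : Decidable (pal7 x y) := by unfold pal7; infer_instance

lemma pal7_irrefl : ∀ x : ZMod 7, ¬ pal7 x x := by decide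

lemma pal7_asymm : ∀ x y : ZMod 7, pal7 x y → pal7 y x → False := by decide

lemma darc_of_proj : ∀ u v : DV, pal7 (proj u) (proj v) → Darc u v := by
  rintro (_ | ⟨i, m⟩) (_ | ⟨k, l⟩) h
  · exact absurd h (pal7_irrefl 0)
  · exact h
  · exact h
  · by_cases hik : i = k
    · subst hik; exact absurd h (pal7_irrefl _)
    · show (if i = k then l = m + 1 else pal7 ((i : ℕ) + 1) ((k : ℕ) + 1))
      rw [if_neg hik]; exact h

lemma pal7_of_darc : ∀ u v : DV, Darc u v → proj u ≠ proj v →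
    pal7 (proj u) (proj v) := by
  rintro (_ | ⟨i, m⟩) (_ | ⟨k, l⟩) h hne
  · exact h.elim
  · exact h
  · exact h
  · by_cases hik : i = k
    · subst hik; exact absurd rfl hne
    · have h' : (if i = k then l = m + 1 else pal7 ((i : ℕ) + 1) ((k : ℕ) + 1)) := h
      rwa [if_neg hik] at h'

theorem stmt16 (f : DV → Fin 4) (hf : ∀ c : Fin 4, TransOn Darc {v | f v = c}) :
    ∃ c : Fin 4, ∃ S : Finset (ZMod 7), S.card = 4 ∧
      (∀ x ∈ S, ∃ v : DV, f v = c ∧ proj v = x) ∧ TransOn pal7 ↑S := by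
  classical
  set T : Fin 4 → Finset (ZMod 7) :=
    fun c => Finset.univ.filter (fun x => ∃ v : DV, f v = c ∧ proj v = x) with hT
  have memT : ∀ c x, x ∈ T c ↔ ∃ v : DV, f v = c ∧ proj v = x := by
    intro c x; simp [hT]
  -- no triangle is monochromatic
  have tri : ∀ i : Fin 6,
      ¬ (f (some (i,0)) = f (some (i,1)) ∧ f (some (i,0)) = f (some (i,2))) := by
    rintro i ⟨h1, h2⟩
    have hd1 : Darc (some (i,0)) (some (i,1)) := by
      show (if i = i then ((1:ZMod 3) = 0 + 1) else _)
      rw [if_pos rfl]; decide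
    have hd2 : Darc (some (i,1)) (some (i,2)) := by
      show (if i = i then ((2:ZMod 3) = 1 + 1) else _)
      rw [if_pos rfl]; decide
    have := hf (f (some (i,0))) (some (i,0)) rfl (some (i,1)) h1.symm
      (some (i,2)) h2.symm hd1 hd2
    have h' : (if i = i then ((2:ZMod 3) = 0 + 1) else pal7 _ _) := this
    rw [if_pos rfl] at h'
    exact absurd h' (by decide)
  have key : ∃ c : Fin 4, 4 ≤ (T c).card := by
    by_contra hcon
    push_neg at hcon
    have hub : ∑ c : Fin 4, (T c).card ≤ 12 := by
      calc ∑ c : Fin 4, (T c).card ≤ ∑ _c : Fin 4, 3 :=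
            Finset.sum_le_sum (fun c _ => by have := hcon c; omega)
        _ = 12 := by simp
    have hcard : ∀ c : Fin 4,
        (T c).card = ∑ x : ZMod 7, if x ∈ T c then 1 else 0 := by
      intro c
      rw [← Finset.card_filter]
      congr 1
      ext x
      simp
    have hswap : ∑ c : Fin 4, (T c).card
        = ∑ x : ZMod 7, (Finset.univ.filter (fun c => x ∈ T c)).card := by
      simp only [hcard, Finset.card_filter]
      exact Finset.sum_comm
    have hlb : ∀ x : ZMod 7,
        (if x = 0 then 1 else 2) ≤ (Finset.univ.filter (fun c => x ∈ T c)).card := by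
      intro x
      by_cases hx : x = 0
      · subst hx
        rw [if_pos rfl]
        have hm : f none ∈ Finset.univ.filter (fun c => (0 : ZMod 7) ∈ T c) := by
          simp only [Finset.mem_filter, Finset.mem_univ, true_and, memT]
          exact ⟨none, rfl, rfl⟩
        exact Finset.card_pos.mpr ⟨_, hm⟩
      · rw [if_neg hx]
        obtain ⟨i, hi⟩ : ∃ i : Fin 6, (((i : ℕ) + 1 : ZMod 7)) = x := by
          revert hx; revert x; decide
        have hmem : ∀ m : ZMod 3,
            f (some (i, m)) ∈ Finset.univ.filter (fun c => x ∈ T c) := by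
          intro m
          simp only [Finset.mem_filter, Finset.mem_univ, true_and, memT]
          exact ⟨some (i, m), rfl, hi⟩
        have hne : f (some (i,0)) ≠ f (some (i,1)) ∨
            f (some (i,0)) ≠ f (some (i,2)) := by
          by_contra h
          push_neg at h
          exact tri i ⟨h.1, h.2⟩
        rcases hne with hne | hne
        · exact Finset.one_lt_card.mpr ⟨_, hmem 0, _, hmem 1, hne⟩
        · exact Finset.one_lt_card.mpr ⟨_, hmem 0, _, hmem 2, hne⟩
    have h13 : (13 : ℕ) ≤ ∑ x : ZMod 7,
        (Finset.univ.filter (fun c => x ∈ T c)).card := by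
      calc (13 : ℕ) = ∑ x : ZMod 7, (if x = 0 then 1 else 2) := by decide
        _ ≤ _ := Finset.sum_le_sum (fun x _ => hlb x)
    omega
  obtain ⟨c, hc⟩ := key
  obtain ⟨S, hST, hScard⟩ := Finset.exists_subset_card_eq hc
  refine ⟨c, S, hScard, fun x hx => (memT c x).mp (hST hx), ?_⟩
  intro a ha b hb c' hc' hab hbc
  by_cases hac : a = c'
  · subst hac
    exact (pal7_asymm _ _ hab hbc).elim
  · obtain ⟨u, hu, hup⟩ := (memT c a).mp (hST ha)
    obtain ⟨v, hv, hvp⟩ := (memT c b).mp (hST hb)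
    obtain ⟨w, hw, hwp⟩ := (memT c c').mp (hST hc')
    have hduv : Darc u v := darc_of_proj u v (by rw [hup, hvp]; exact hab)
    have hdvw : Darc v w := darc_of_proj v w (by rw [hvp, hwp]; exact hbc)
    have hduw : Darc u w := hf c u hu v hv w hw hduv hdvw
    have := pal7_of_darc u w hduw (by rw [hup, hwp]; exact hac)
    rwa [hup, hwp] at this
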